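/- Let p be a probability distribution over pairs (S,β) with S ⊆ [d], |S| = k, β ∈ {−1,1}^S, and let p' be the distribution over subsets of [d] obtained by sampling (S,β) ∼ p and then sampling T uniformly at random among the 2^k subsets of S. For any database D, any estimates ŷ_T ∈ ℝ indexed by subsets T ⊆ [d], and any λ ≥ 0, if E_{T ∼ p'}[|ŷ_T − parity_T(D)|²] ≤ λ², then the estimates z_{S,β} = Σ_{T ⊆ S} α_{S,β,T} · ŷ_T satisfy E_{(S,β) ∼ p}[|z_{S,β} − marg_{(S,β)}(D)|²] ≤ λ². -/

import Mathlib

open Finset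

lemma pointwise (d k : ℕ) (S : Finset (Fin d)) (hS : S.card = k)
    (b a : Fin d → ℝ) (hb : ∀ i, b i = 1 ∨ b i = -1) (ha : ∀ i, a i = 1 ∨ a i = -1) :
    (∏ i ∈ S, (if a i = b i then (1:ℝ) else 0)) =
      ∑ T ∈ S.powerset, ((2:ℝ) ^ (-(k:ℤ)) * ∏ i ∈ T, b i) * ∏ i ∈ T, a i := by
  have h1 : ∀ i ∈ S, (if a i = b i then (1:ℝ) else 0) = (b i * a i + 1) * 2⁻¹ := by
    intro i _
    rcases hb i with h | h <;> rcases ha i with h' | h' <;> simp [h, h'] <;> norm_num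
  rw [Finset.prod_congr rfl h1, Finset.prod_mul_distrib, Finset.prod_const,
    Finset.prod_add, hS, Finset.sum_mul]
  refine Finset.sum_congr rfl fun T hT => ?_
  rw [Finset.prod_mul_distrib]
  have : (2:ℝ) ^ (-(k:ℤ)) = (2⁻¹ : ℝ) ^ k := by
    rw [zpow_neg, zpow_natCast, inv_pow]
  rw [this]
  simp
  ring

lemma marg_eq (d k : ℕ) (S : Finset (Fin d)) (hS : S.card = k)
    (b : Fin d → ℝ) (hb : ∀ i, b i = 1 ∨ b i = -1)
    (D : Multiset (Fin d → ℝ)) (hD : ∀ e ∈ D, ∀ i, e i = 1 ∨ e i = -1) :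
    (D.map fun e => ∏ i ∈ S, (if e i = b i then (1:ℝ) else 0)).sum =
      ∑ T ∈ S.powerset, ((2:ℝ) ^ (-(k:ℤ)) * ∏ i ∈ T, b i) *
        (D.map fun e => ∏ i ∈ T, e i).sum := by
  induction D using Multiset.induction_on with
  | empty => simp
  | cons a s ih =>
    have ha := hD a (Multiset.mem_cons_self a s)
    have hs : ∀ e ∈ s, ∀ i, e i = 1 ∨ e i = -1 := fun e he => hD e (Multiset.mem_cons_of_mem he)
    simp only [Multiset.map_cons, Multiset.sum_cons, ih hs, mul_add, Finset.sum_add_distrib]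
    rw [pointwise d k S hS b a hb ha]

/-- Let `p` be a probability distribution over pairs `(S,β)` with
`|S| = k` and `β ∈ {−1,1}^S` (encoded by a Boolean vector, `true ↦ 1`, `false ↦ -1`),
and let `p'` be the distribution on subsets of `[d]` obtained by sampling `(S,β) ∼ p`
and then a uniformly random subset `T` of `S` (each with probability `2^{−k}`).
If `E_{T ∼ p'}[|ŷ_T − parity_T(D)|²] ≤ λ²`, then the estimates
`z_{S,β} = Σ_{T ⊆ S} α_{S,β,T} ŷ_T` satisfy `E_{(S,β) ∼ p}[|z_{S,β} − marg_{(S,β)}(D)|²] ≤ λ²`. -/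
theorem stmt_3 (d k : ℕ) (hd : 1 ≤ d) (hk : 1 ≤ k)
    (D : Multiset (Fin d → ℝ)) (hD : ∀ e ∈ D, ∀ i, e i = 1 ∨ e i = -1)
    (p : Finset (Fin d) × (Fin d → Bool) → ℝ)
    (hp0 : ∀ x, 0 ≤ p x)
    (hp1 : ∑ x : Finset (Fin d) × (Fin d → Bool), p x = 1)
    (hpk : ∀ x, p x ≠ 0 → x.1.card = k)
    (yhat : Finset (Fin d) → ℝ) (lam : ℝ) (hlam : 0 ≤ lam)
    (hmse : ∑ T : Finset (Fin d),
        (∑ x : Finset (Fin d) × (Fin d → Bool),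
          p x * (if T ⊆ x.1 then (2 : ℝ) ^ (-(k : ℤ)) else 0)) *
        |yhat T - (D.map fun e => ∏ i ∈ T, e i).sum| ^ 2 ≤ lam ^ 2) :
    ∑ x : Finset (Fin d) × (Fin d → Bool),
      p x *
        |(∑ T ∈ x.1.powerset,
            ((2 : ℝ) ^ (-(k : ℤ)) * ∏ i ∈ T, (if x.2 i then (1 : ℝ) else -1)) * yhat T) -
          (D.map fun e =>
            ∏ i ∈ x.1, (if e i = (if x.2 i then (1 : ℝ) else -1) then (1 : ℝ) else 0)).sum| ^ 2
      ≤ lam ^ 2 := by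
  set q : ℝ := (2:ℝ) ^ (-(k:ℤ)) with hq
  set u : Finset (Fin d) → ℝ := fun T => yhat T - (D.map fun e => ∏ i ∈ T, e i).sum with hu
  have hqq : q * (2:ℝ)^k = 1 := by
    rw [hq, zpow_neg, zpow_natCast]
    field_simp
  have key : ∀ x : Finset (Fin d) × (Fin d → Bool), p x ≠ 0 →
      |(∑ T ∈ x.1.powerset, (q * ∏ i ∈ T, (if x.2 i then (1:ℝ) else -1)) * yhat T) -
        (D.map fun e => ∏ i ∈ x.1, (if e i = (if x.2 i then (1:ℝ) else -1) then (1:ℝ) else 0)).sum| ^ 2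
      ≤ ∑ T ∈ x.1.powerset, q * u T ^ 2 := by
    intro x hx
    set b : Fin d → ℝ := fun i => if x.2 i then (1:ℝ) else -1 with hb
    have hbpm : ∀ i, b i = 1 ∨ b i = -1 := by
      intro i; by_cases h : x.2 i <;> simp [hb, h]
    have hcard := hpk x hx
    rw [marg_eq d k x.1 hcard b hbpm D hD, ← Finset.sum_sub_distrib]
    have hdiff : ∀ T ∈ x.1.powerset,
        (q * ∏ i ∈ T, b i) * yhat T - (q * ∏ i ∈ T, b i) * (D.map fun e => ∏ i ∈ T, e i).sum
          = (q * ∏ i ∈ T, b i) * u T := by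
      intro T _; rw [hu]; ring
    rw [Finset.sum_congr rfl hdiff, sq_abs]
    calc (∑ T ∈ x.1.powerset, (q * ∏ i ∈ T, b i) * u T) ^ 2
        ≤ (x.1.powerset.card : ℝ) * ∑ T ∈ x.1.powerset, ((q * ∏ i ∈ T, b i) * u T) ^ 2 := by
          exact_mod_cast sq_sum_le_card_mul_sum_sq (s := x.1.powerset) (f := fun T => (q * ∏ i ∈ T, b i) * u T)
      _ = ∑ T ∈ x.1.powerset, q * u T ^ 2 := by
          rw [Finset.card_powerset, hcard, Finset.mul_sum]
          refine Finset.sum_congr rfl fun T _ => ?_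
          have hsq : (∏ i ∈ T, b i) ^ 2 = 1 := by
            rw [← Finset.prod_pow]
            refine Finset.prod_eq_one fun i _ => ?_
            rcases hbpm i with h | h <;> rw [h] <;> norm_num
          have : ((q * ∏ i ∈ T, b i) * u T) ^ 2 = q * q * ((∏ i ∈ T, b i)^2 * u T ^ 2) := by ring
          rw [this, hsq, one_mul]
          push_cast
          rw [show ((2:ℝ)^k * (q * q * u T ^ 2)) = (q * (2:ℝ)^k) * (q * u T ^2) by ring, hqq, one_mul]
  calc ∑ x : Finset (Fin d) × (Fin d → Bool), p x *
        |(∑ T ∈ x.1.powerset, (q * ∏ i ∈ T, (if x.2 i then (1:ℝ) else -1)) * yhat T) -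
          (D.map fun e => ∏ i ∈ x.1, (if e i = (if x.2 i then (1:ℝ) else -1) then (1:ℝ) else 0)).sum| ^ 2
      ≤ ∑ x : Finset (Fin d) × (Fin d → Bool), p x * ∑ T ∈ x.1.powerset, q * u T ^ 2 := by
        refine Finset.sum_le_sum fun x _ => ?_
        by_cases hx : p x = 0
        · simp [hx]
        · exact mul_le_mul_of_nonneg_left (key x hx) (hp0 x)
    _ = ∑ x : Finset (Fin d) × (Fin d → Bool), ∑ T : Finset (Fin d),
          p x * (if T ⊆ x.1 then q else 0) * u T ^ 2 := by
        refine Finset.sum_congr rfl fun x _ => ?_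
        rw [Finset.mul_sum]
        rw [show ∑ T : Finset (Fin d), p x * (if T ⊆ x.1 then q else 0) * u T ^ 2
            = ∑ T : Finset (Fin d), if T ⊆ x.1 then p x * (q * u T ^ 2) else 0 by
          refine Finset.sum_congr rfl fun T _ => ?_
          by_cases h : T ⊆ x.1 <;> simp [h] <;> ring]
        rw [Finset.sum_ite, Finset.sum_const_zero, add_zero]
        refine Finset.sum_congr ?_ fun T _ => rfl
        ext T; simp [Finset.mem_powerset]
    _ = ∑ T : Finset (Fin d),
          (∑ x : Finset (Fin d) × (Fin d → Bool), p x * (if T ⊆ x.1 then q else 0)) * u T ^ 2 := by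
        rw [Finset.sum_comm]
        refine Finset.sum_congr rfl fun T _ => ?_
        rw [Finset.sum_mul]
    _ ≤ lam ^ 2 := by
        refine le_trans (le_of_eq ?_) hmse
        exact Finset.sum_congr rfl fun T _ => by rw [sq_abs]
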